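/- Let X and A be Borel spaces, D a nonempty Borel subset of X×A with nonempty x-sections A(x), q a Borel measurable transition probability kernel from X×A to X, ω : X → [1,∞) Borel measurable, u : D → ℝ Borel measurable with |u(x,a)| ≤ zω(x) for all (x,a) ∈ D and some z > 0, and let δ : ℝ → ℝ and γ : [0,∞) → [0,∞) satisfy: γ is increasing with γ(z) < z for z > 0; |δ(z₁) − δ(z₂)| ≤ γ(|z₁ − z₂|) for all z₁, z₂ ∈ ℝ; δ is increasing with δ(0) = 0; γ is subadditive and γ(ω(x)y) ≤ ω(x)γ(y) for all x ∈ X, y > 0; and ∫_X ω(y) q(dy|x,a) ≤ αω(x) on D for some α > 0. Define Tv(x) = sup_{a∈A(x)} [u(x,a) + ∫_X δ(v(y)) q(dy|x,a)]. Then for all Borel measurable v₁, v₂ : X → ℝ with ‖v₁‖_ω < ∞ and ‖v₂‖_ω < ∞ one has sup_{x∈X} |Tv₁(x) − Tv₂(x)|/ω(x) ≤ αγ(‖v₁ − v₂‖_ω), where ‖v‖_ω := sup_{x∈X} |v(x)|/ω(x). -/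

import Mathlib

open MeasureTheory ProbabilityTheory

/-- The Bellman operator `Tv(x) = sup_{a ∈ A(x)} [u(x,a) + ∫ δ(v(y)) q(dy|x,a)]`. -/
noncomputable def bellmanOp {X A : Type*} [MeasurableSpace X] [MeasurableSpace A]
    (q : Kernel (X × A) X) (D : Set (X × A)) (u : X × A → ℝ) (δ : ℝ → ℝ)
    (v : X → ℝ) (x : X) : ℝ :=
  sSup ((fun a => u (x, a) + ∫ y, δ (v y) ∂(q (x, a))) '' {a : A | (x, a) ∈ D})

private lemma abs_sSup_sub_sSup_le' {A : Type*} {s : Set A} (hs : s.Nonempty)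
    {f g : A → ℝ} (hbf : BddAbove (f '' s)) (hbg : BddAbove (g '' s))
    {ε : ℝ} (h : ∀ a ∈ s, |f a - g a| ≤ ε) :
    |sSup (f '' s) - sSup (g '' s)| ≤ ε := by
  rw [abs_sub_le_iff]
  constructor
  · rw [sub_le_iff_le_add]
    refine csSup_le (hs.image f) ?_
    rintro _ ⟨a, ha, rfl⟩
    have h1 := abs_le.1 (h a ha)
    have h2 : g a ≤ sSup (g '' s) := le_csSup hbg ⟨a, ha, rfl⟩
    linarith [h1.2]
  · rw [sub_le_iff_le_add]
    refine csSup_le (hs.image g) ?_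
    rintro _ ⟨a, ha, rfl⟩
    have h1 := abs_le.1 (h a ha)
    have h2 : f a ≤ sSup (f '' s) := le_csSup hbf ⟨a, ha, rfl⟩
    linarith [h1.1]

/-- Contraction estimate for the Bellman operator in the weighted supremum norm:
`sup_x |Tv₁ x − Tv₂ x|/ω x ≤ α γ(‖v₁ − v₂‖_ω)`. -/
theorem bellman_operator_contraction_estimate
    {X A : Type*}
    [MetricSpace X] [SecondCountableTopology X] [MeasurableSpace X] [BorelSpace X] [Nonempty X]
    [MetricSpace A] [SecondCountableTopology A] [MeasurableSpace A] [BorelSpace A] [Nonempty A]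
    (D : Set (X × A)) (hD : MeasurableSet D) (hDne : ∀ x : X, ∃ a : A, (x, a) ∈ D)
    (q : Kernel (X × A) X) [IsMarkovKernel q]
    (ω : X → ℝ) (hωm : Measurable ω) (hω1 : ∀ x, 1 ≤ ω x)
    (u : X × A → ℝ) (hu : Measurable u)
    (z : ℝ) (hz : 0 < z) (huω : ∀ p ∈ D, |u p| ≤ z * ω p.1)
    (δ : ℝ → ℝ) (γ : ℝ → ℝ)
    (hγm : MonotoneOn γ (Set.Ici 0)) (hγ0 : ∀ s : ℝ, 0 ≤ s → 0 ≤ γ s)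
    (hγlt : ∀ s : ℝ, 0 < s → γ s < s)
    (hδγ : ∀ z₁ z₂ : ℝ, |δ z₁ - δ z₂| ≤ γ |z₁ - z₂|)
    (hδm : Monotone δ) (hδ0 : δ 0 = 0)
    (hγsub : ∀ y : ℝ, 0 ≤ y → ∀ s : ℝ, 0 ≤ s → γ (y + s) ≤ γ y + γ s)
    (hγω : ∀ x : X, ∀ y : ℝ, 0 < y → γ (ω x * y) ≤ ω x * γ y)
    (α : ℝ) (hα : 0 < α)
    (hωq : ∀ p ∈ D, Integrable ω (q p) ∧ ∫ y, ω y ∂(q p) ≤ α * ω p.1)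
    (v₁ v₂ : X → ℝ) (hv₁ : Measurable v₁) (hv₂ : Measurable v₂)
    (hv₁b : ∃ c : ℝ, ∀ x, |v₁ x| ≤ c * ω x) (hv₂b : ∃ c : ℝ, ∀ x, |v₂ x| ≤ c * ω x) :
    ⨆ x : X, |bellmanOp q D u δ v₁ x - bellmanOp q D u δ v₂ x| / ω x ≤
      α * γ (⨆ x : X, |v₁ x - v₂ x| / ω x) := by
  -- basic facts about ω
  have hω0 : ∀ x, (0:ℝ) < ω x := fun x => lt_of_lt_of_le one_pos (hω1 x)
  -- δ is 1-Lipschitz hence continuous and measurable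
  have hδlip : ∀ a b : ℝ, |δ a - δ b| ≤ |a - b| := by
    intro a b
    rcases eq_or_ne a b with rfl | hne
    · simp
    · exact (hδγ a b).trans (le_of_lt (hγlt _ (abs_pos.2 (sub_ne_zero.2 hne))))
  have hδcont : Continuous δ := by
    have : LipschitzWith 1 δ := LipschitzWith.of_dist_le_mul fun a b => by
      rw [Real.dist_eq, Real.dist_eq]; simpa using hδlip a b
    exact this.continuous
  have hδabs : ∀ t : ℝ, |δ t| ≤ γ |t| := fun t => by
    simpa [hδ0] using hδγ t 0
  -- extended γ-ω inequality (allowing y = 0)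
  have hγω' : ∀ x : X, ∀ y : ℝ, 0 ≤ y → γ (ω x * y) ≤ ω x * γ y := by
    intro x y hy
    rcases hy.lt_or_eq with h | h
    · exact hγω x y h
    · rw [← h, mul_zero]
      nlinarith [hγ0 0 le_rfl, hω1 x]
  -- normalize the bounding constants to be ≥ 1
  obtain ⟨c₁', hc₁'⟩ := hv₁b
  obtain ⟨c₂', hc₂'⟩ := hv₂b
  set c₁ : ℝ := max c₁' 1 with hc₁def
  set c₂ : ℝ := max c₂' 1 with hc₂def
  have hc₁1 : (1:ℝ) ≤ c₁ := le_max_right _ _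
  have hc₂1 : (1:ℝ) ≤ c₂ := le_max_right _ _
  have hc₁ : ∀ x, |v₁ x| ≤ c₁ * ω x := fun x =>
    (hc₁' x).trans (mul_le_mul_of_nonneg_right (le_max_left _ _) (hω0 x).le)
  have hc₂ : ∀ x, |v₂ x| ≤ c₂ * ω x := fun x =>
    (hc₂' x).trans (mul_le_mul_of_nonneg_right (le_max_left _ _) (hω0 x).le)
  -- generic facts for a measurable v bounded by c * ω, c ≥ 1
  have hδbnd : ∀ (v : X → ℝ) (c : ℝ), 1 ≤ c → (∀ x, |v x| ≤ c * ω x) →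
      ∀ y : X, |δ (v y)| ≤ γ c * ω y := by
    intro v c hc hvb y
    have h1 : |δ (v y)| ≤ γ |v y| := hδabs _
    have h2 : γ |v y| ≤ γ (ω y * c) := by
      refine hγm (Set.mem_Ici.2 (abs_nonneg _)) ?_ ?_
      · exact Set.mem_Ici.2 (mul_nonneg (hω0 y).le (by linarith))
      · rw [mul_comm]; exact hvb y
    have h3 : γ (ω y * c) ≤ ω y * γ c := hγω' y c (by linarith)
    calc |δ (v y)| ≤ ω y * γ c := by linarith
      _ = γ c * ω y := mul_comm _ _
  have hIδ : ∀ (v : X → ℝ), Measurable v → ∀ (c : ℝ), 1 ≤ c → (∀ x, |v x| ≤ c * ω x) →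
      ∀ p ∈ D, Integrable (fun y => δ (v y)) (q p) := by
    intro v hv c hc hvb p hp
    refine Integrable.mono ((hωq p hp).1.const_mul (γ c))
      (hδcont.measurable.comp hv).aestronglyMeasurable (Filter.Eventually.of_forall fun y => ?_)
    rw [Real.norm_eq_abs, Real.norm_eq_abs]
    refine (hδbnd v c hc hvb y).trans (le_abs_self _)
  have hIbound : ∀ (v : X → ℝ), Measurable v → ∀ (c : ℝ), 1 ≤ c → (∀ x, |v x| ≤ c * ω x) →
      ∀ p ∈ D, |∫ y, δ (v y) ∂(q p)| ≤ γ c * (α * ω p.1) := by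
    intro v hv c hc hvb p hp
    have h1 : |∫ y, δ (v y) ∂(q p)| ≤ ∫ y, |δ (v y)| ∂(q p) := by
      simpa [Real.norm_eq_abs] using norm_integral_le_integral_norm (μ := q p) (fun y => δ (v y))
    have h2 : ∫ y, |δ (v y)| ∂(q p) ≤ ∫ y, γ c * ω y ∂(q p) := by
      refine integral_mono (hIδ v hv c hc hvb p hp).abs ((hωq p hp).1.const_mul (γ c))
        fun y => hδbnd v c hc hvb y
    have h3 : ∫ y, γ c * ω y ∂(q p) = γ c * ∫ y, ω y ∂(q p) := integral_const_mul _ _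
    have h4 : γ c * ∫ y, ω y ∂(q p) ≤ γ c * (α * ω p.1) :=
      mul_le_mul_of_nonneg_left (hωq p hp).2 (hγ0 c (by linarith))
    linarith
  -- bounded above of the sup defining bellmanOp
  have hbddim : ∀ (v : X → ℝ), Measurable v → ∀ (c : ℝ), 1 ≤ c → (∀ x, |v x| ≤ c * ω x) →
      ∀ x : X, BddAbove ((fun a => u (x, a) + ∫ y, δ (v y) ∂(q (x, a))) '' {a : A | (x, a) ∈ D}) := by
    intro v hv c hc hvb x
    refine ⟨z * ω x + γ c * (α * ω x), ?_⟩
    rintro _ ⟨a, ha, rfl⟩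
    have h1 := (abs_le.1 (huω (x, a) ha)).2
    have h2 := (abs_le.1 (hIbound v hv c hc hvb (x, a) ha)).2
    exact add_le_add h1 h2
  -- the weighted norm K
  set K : ℝ := ⨆ x : X, |v₁ x - v₂ x| / ω x with hKdef
  have hbddK : BddAbove (Set.range fun x => |v₁ x - v₂ x| / ω x) := by
    refine ⟨c₁ + c₂, ?_⟩
    rintro _ ⟨x, rfl⟩
    rw [div_le_iff₀ (hω0 x)]
    calc |v₁ x - v₂ x| ≤ |v₁ x| + |v₂ x| := abs_sub _ _
      _ ≤ c₁ * ω x + c₂ * ω x := add_le_add (hc₁ x) (hc₂ x)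
      _ = (c₁ + c₂) * ω x := by ring
  have hK0 : 0 ≤ K := Real.iSup_nonneg fun x => div_nonneg (abs_nonneg _) (hω0 x).le
  have hKx : ∀ x, |v₁ x - v₂ x| ≤ K * ω x := by
    intro x
    have := le_ciSup hbddK x
    rw [div_le_iff₀ (hω0 x)] at this
    exact this
  have hγK0 : 0 ≤ γ K := hγ0 K hK0
  -- the pointwise bound for bellmanOp difference
  have hmain : ∀ x : X, |bellmanOp q D u δ v₁ x - bellmanOp q D u δ v₂ x| ≤ α * γ K * ω x := by
    intro x
    have hSne : {a : A | (x, a) ∈ D}.Nonempty := hDne x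
    unfold bellmanOp
    refine abs_sSup_sub_sSup_le' hSne (hbddim v₁ hv₁ c₁ hc₁1 hc₁ x)
      (hbddim v₂ hv₂ c₂ hc₂1 hc₂ x) ?_
    intro a ha
    have hp : (x, a) ∈ D := ha
    have hI₁ := hIδ v₁ hv₁ c₁ hc₁1 hc₁ (x, a) hp
    have hI₂ := hIδ v₂ hv₂ c₂ hc₂1 hc₂ (x, a) hp
    have heq : u (x, a) + (∫ y, δ (v₁ y) ∂(q (x, a))) -
        (u (x, a) + ∫ y, δ (v₂ y) ∂(q (x, a))) =
        ∫ y, (δ (v₁ y) - δ (v₂ y)) ∂(q (x, a)) := by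
      rw [integral_sub hI₁ hI₂]; ring
    rw [heq]
    have hptw : ∀ y : X, |δ (v₁ y) - δ (v₂ y)| ≤ γ K * ω y := by
      intro y
      have h1 : |δ (v₁ y) - δ (v₂ y)| ≤ γ |v₁ y - v₂ y| := hδγ _ _
      have h2 : γ |v₁ y - v₂ y| ≤ γ (ω y * K) := by
        refine hγm (Set.mem_Ici.2 (abs_nonneg _)) (Set.mem_Ici.2 (mul_nonneg (hω0 y).le hK0)) ?_
        rw [mul_comm]; exact hKx y
      have h3 : γ (ω y * K) ≤ ω y * γ K := hγω' y K hK0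
      calc |δ (v₁ y) - δ (v₂ y)| ≤ ω y * γ K := by linarith
        _ = γ K * ω y := mul_comm _ _
    calc |∫ y, (δ (v₁ y) - δ (v₂ y)) ∂(q (x, a))|
        ≤ ∫ y, |δ (v₁ y) - δ (v₂ y)| ∂(q (x, a)) := by
          simpa [Real.norm_eq_abs] using
            norm_integral_le_integral_norm (μ := q (x, a)) (fun y => δ (v₁ y) - δ (v₂ y))
      _ ≤ ∫ y, γ K * ω y ∂(q (x, a)) :=
          integral_mono (hI₁.sub hI₂).abs ((hωq (x, a) hp).1.const_mul (γ K)) hptw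
      _ = γ K * ∫ y, ω y ∂(q (x, a)) := integral_const_mul _ _
      _ ≤ γ K * (α * ω x) := mul_le_mul_of_nonneg_left (hωq (x, a) hp).2 hγK0
      _ = α * γ K * ω x := by ring
  -- conclude
  refine ciSup_le fun x => ?_
  rw [div_le_iff₀ (hω0 x)]
  exact hmain x
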